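/- arXiv:2109.12604 — 5 statements merged into one kernel-verified Lean document; each statement's English description precedes it below -/
import Mathlib

section
/- Let (λ(t), x(t), v(t)) be a continuously differentiable solution on [0,∞) of the accelerated primal-dual flow: θ(t)λ'(t) = A v(t) − b, x'(t) = v(t) − x(t), γ(t)v'(t) = μ_β(x(t) − v(t)) − ∇_x L_β(x(t), λ(t)), where θ(t) = θ₀ e^{−t} and γ(t) = μ_β + (γ₀ − μ_β)e^{−t} with θ₀, γ₀ > 0. Define the Lyapunov function E(t) = L_β(x(t), λ*) − L_β(x*, λ(t)) + (γ(t)/2)‖v(t) − x*‖² + (θ(t)/2)‖λ(t) − λ*‖². Then for all t ≥ 0, d/dt E(t) ≤ −E(t) − (μ_β/2)‖x'(t)‖². -/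
open scoped RealInnerProductSpace

/-- The smallest singular value of a linear map between Euclidean spaces. -/
noncomputable def sigmaMin {n m : ℕ}
    (A : EuclideanSpace ℝ (Fin n) →L[ℝ] EuclideanSpace ℝ (Fin m)) : ℝ :=
  sInf {c : ℝ | ∃ x : EuclideanSpace ℝ (Fin n), ‖x‖ = 1 ∧ ‖A x‖ = c}

lemma sigmaMin_nonneg {n m : ℕ}
    (A : EuclideanSpace ℝ (Fin n) →L[ℝ] EuclideanSpace ℝ (Fin m)) :
    0 ≤ sigmaMin A :=
  Real.sInf_nonneg (fun c hc => by obtain ⟨x, _, rfl⟩ := hc; exact norm_nonneg _)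

lemma sigmaMin_mul_le {n m : ℕ}
    (A : EuclideanSpace ℝ (Fin n) →L[ℝ] EuclideanSpace ℝ (Fin m))
    (z : EuclideanSpace ℝ (Fin n)) :
    sigmaMin A * ‖z‖ ≤ ‖A z‖ := by
  rcases eq_or_ne z 0 with rfl | hz
  · simp
  · have hz' : (0:ℝ) < ‖z‖ := norm_pos_iff.mpr hz
    have h1 : sigmaMin A ≤ ‖A (‖z‖⁻¹ • z)‖ := by
      apply csInf_le
      · exact ⟨0, fun c hc => by obtain ⟨x, _, rfl⟩ := hc; exact norm_nonneg _⟩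
      · exact ⟨‖z‖⁻¹ • z, by
          simp [norm_smul, abs_of_pos (inv_pos.mpr hz'), inv_mul_cancel₀ hz'.ne'], rfl⟩
    have h2 : ‖A (‖z‖⁻¹ • z)‖ = ‖z‖⁻¹ * ‖A z‖ := by
      rw [map_smul, norm_smul, Real.norm_eq_abs, abs_of_pos (inv_pos.mpr hz')]
    rw [h2] at h1
    calc sigmaMin A * ‖z‖ ≤ (‖z‖⁻¹ * ‖A z‖) * ‖z‖ := by nlinarith
      _ = ‖A z‖ := by field_simp

lemma inner_expand_aux {n m : ℕ}
    (A : EuclideanSpace ℝ (Fin n) →L[ℝ] EuclideanSpace ℝ (Fin m))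
    (gX xt xst xp : EuclideanSpace ℝ (Fin n))
    (lamt : EuclideanSpace ℝ (Fin m)) (μβ β : ℝ) :
    ⟪xp + (xt - xst), μβ • (-xp) -
      (gX + β • (ContinuousLinearMap.adjoint A) (A xt - A xst)
        + (ContinuousLinearMap.adjoint A) lamt)⟫
      = -(μβ * ‖xp‖ ^ 2) - μβ * ⟪xt - xst, xp⟫
        - (⟪gX, xp⟫ + β * ⟪A xt - A xst, A xp⟫ + ⟪lamt, A xp⟫)
        - (⟪gX, xt - xst⟫ + β * ‖A xt - A xst‖ ^ 2 + ⟪lamt, A xt - A xst⟫) := by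
  simp only [inner_sub_right, inner_sub_left, inner_add_right, inner_add_left,
    real_inner_smul_right, inner_neg_right, inner_neg_left,
    ContinuousLinearMap.adjoint_inner_right, map_sub, map_add,
    ← real_inner_self_eq_norm_sq]
  linear_combination real_inner_comm xp gX + real_inner_comm xt gX - real_inner_comm xst gX + β * real_inner_comm (A xp) (A xt) - β * real_inner_comm (A xp) (A xst) + real_inner_comm (A xp) lamt + real_inner_comm (A xt) lamt - real_inner_comm (A xst) lamt

set_option maxHeartbeats 1000000 in
/-- Lemma 2.1 (i): exponential decay inequality for the Lyapunov function of the
accelerated primal-dual flow. -/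
theorem apd_flow_lyapunov_derivative {n m : ℕ}
    (f : EuclideanSpace ℝ (Fin n) → ℝ)
    (gradf : EuclideanSpace ℝ (Fin n) → EuclideanSpace ℝ (Fin n))
    (A : EuclideanSpace ℝ (Fin n) →L[ℝ] EuclideanSpace ℝ (Fin m))
    (b : EuclideanSpace ℝ (Fin m))
    (μ L β θ₀ γ₀ μβ : ℝ)
    (hμ : 0 ≤ μ) (hμL : μ ≤ L) (hβ : 0 ≤ β) (hθ₀ : 0 < θ₀) (hγ₀ : 0 < γ₀)
    (hμβ : μβ = μ + β * sigmaMin A ^ 2)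
    (hgrad : ∀ x, HasGradientAt f (gradf x) x)
    (hconv : ∀ x y, f x + ⟪gradf x, y - x⟫ + μ / 2 * ‖y - x‖ ^ 2 ≤ f y)
    (hlip : ∀ x y, ⟪gradf x - gradf y, x - y⟫ ≤ L * ‖x - y‖ ^ 2)
    (xs : EuclideanSpace ℝ (Fin n)) (ls : EuclideanSpace ℝ (Fin m))
    (hKKT1 : A xs = b)
    (hKKT2 : gradf xs + (ContinuousLinearMap.adjoint A) ls = 0)
    (lam : ℝ → EuclideanSpace ℝ (Fin m))
    (x v : ℝ → EuclideanSpace ℝ (Fin n))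
    (lam' : ℝ → EuclideanSpace ℝ (Fin m))
    (x' v' : ℝ → EuclideanSpace ℝ (Fin n))
    (hlamd : ∀ t, 0 ≤ t → HasDerivAt lam (lam' t) t)
    (hxd : ∀ t, 0 ≤ t → HasDerivAt x (x' t) t)
    (hvd : ∀ t, 0 ≤ t → HasDerivAt v (v' t) t)
    (hlamc : Continuous lam') (hxc : Continuous x') (hvc : Continuous v')
    (θ γ : ℝ → ℝ)
    (hθ : ∀ t, θ t = θ₀ * Real.exp (-t))
    (hγ : ∀ t, γ t = μβ + (γ₀ - μβ) * Real.exp (-t))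
    (hode1 : ∀ t, 0 ≤ t → θ t • lam' t = A (v t) - b)
    (hode2 : ∀ t, 0 ≤ t → x' t = v t - x t)
    (hode3 : ∀ t, 0 ≤ t → γ t • v' t =
      μβ • (x t - v t) -
        (gradf (x t) + β • (ContinuousLinearMap.adjoint A) (A (x t) - b)
          + (ContinuousLinearMap.adjoint A) (lam t)))
    (Lβ : EuclideanSpace ℝ (Fin n) → EuclideanSpace ℝ (Fin m) → ℝ)
    (hLβ : ∀ z w, Lβ z w = f z + β / 2 * ‖A z - b‖ ^ 2 + ⟪w, A z - b⟫)
    (Efun : ℝ → ℝ)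
    (hE : ∀ t, Efun t = Lβ (x t) ls - Lβ xs (lam t)
      + γ t / 2 * ‖v t - xs‖ ^ 2 + θ t / 2 * ‖lam t - ls‖ ^ 2) :
    ∀ t, 0 ≤ t → ∀ d, HasDerivAt Efun d t →
      d ≤ -Efun t - μβ / 2 * ‖x' t‖ ^ 2 := by
  intro t ht d hd
  have hAxs : A xs - b = 0 := sub_eq_zero.mpr hKKT1
  have hEfun : Efun = fun s => f (x s) + β / 2 * ‖A (x s) - b‖ ^ 2 + ⟪ls, A (x s) - b⟫
      - f xs + γ s / 2 * ‖v s - xs‖ ^ 2 + θ s / 2 * ‖lam s - ls‖ ^ 2 := by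
    funext s
    rw [hE s, hLβ, hLβ, hAxs]
    simp
  have hdx := hxd t ht
  have hdv := hvd t ht
  have hdl := hlamd t ht
  have h1 : HasDerivAt (fun s => f (x s)) ⟪gradf (x t), x' t⟫ t := by
    have := (hgrad (x t)).hasFDerivAt.comp_hasDerivAt t hdx
    simp only [InnerProductSpace.toDual_apply_apply] at this
    exact this
  have hw : HasDerivAt (fun s => A (x s) - b) (A (x' t)) t :=
    (A.hasFDerivAt.comp_hasDerivAt t hdx).sub_const b
  have h2 : HasDerivAt (fun s => ‖A (x s) - b‖ ^ 2)
      (2 * ⟪A (x t) - b, A (x' t)⟫) t := by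
    have h := hw.inner ℝ hw
    have hfe : (fun s => ‖A (x s) - b‖ ^ 2) = fun s => ⟪A (x s) - b, A (x s) - b⟫ := by
      funext s; rw [real_inner_self_eq_norm_sq]
    rw [hfe]
    convert h using 1
    · rfl
    · rfl
    rw [real_inner_comm]; ring
  have h3 : HasDerivAt (fun s => ⟪ls, A (x s) - b⟫) ⟪ls, A (x' t)⟫ t := by
    have h := (hasDerivAt_const t ls).inner ℝ hw
    simpa using h
  have h4 : HasDerivAt (fun s => ‖v s - xs‖ ^ 2) (2 * ⟪v t - xs, v' t⟫) t := by
    have hvs : HasDerivAt (fun s => v s - xs) (v' t) t := hdv.sub_const xs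
    have h := hvs.inner ℝ hvs
    have hfe : (fun s => ‖v s - xs‖ ^ 2) = fun s => ⟪v s - xs, v s - xs⟫ := by
      funext s; rw [real_inner_self_eq_norm_sq]
    rw [hfe]
    convert h using 1
    · rfl
    · rfl
    rw [real_inner_comm]; ring
  have h6 : HasDerivAt (fun s => ‖lam s - ls‖ ^ 2) (2 * ⟪lam t - ls, lam' t⟫) t := by
    have hvs : HasDerivAt (fun s => lam s - ls) (lam' t) t := hdl.sub_const ls
    have h := hvs.inner ℝ hvs
    have hfe : (fun s => ‖lam s - ls‖ ^ 2) = fun s => ⟪lam s - ls, lam s - ls⟫ := by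
      funext s; rw [real_inner_self_eq_norm_sq]
    rw [hfe]
    convert h using 1
    · rfl
    · rfl
    rw [real_inner_comm]; ring
  have hexp : HasDerivAt (fun s : ℝ => Real.exp (-s)) (-Real.exp (-t)) t := by
    have h' := (Real.hasDerivAt_exp (-t)).comp t (hasDerivAt_neg t)
    rw [mul_neg_one] at h'
    exact h'
  have hγd : HasDerivAt γ (μβ - γ t) t := by
    have h : HasDerivAt (fun s => μβ + (γ₀ - μβ) * Real.exp (-s))
        ((γ₀ - μβ) * -Real.exp (-t)) t := by
      have h' := (hasDerivAt_const t μβ).add (hexp.const_mul (γ₀ - μβ))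
      rw [zero_add] at h'
      exact h'
    have hv : μβ - γ t = (γ₀ - μβ) * -Real.exp (-t) := by rw [hγ]; ring
    rw [hv, funext hγ]
    exact h
  have hθd : HasDerivAt θ (-θ t) t := by
    have h : HasDerivAt (fun s => θ₀ * Real.exp (-s)) (θ₀ * -Real.exp (-t)) t :=
      hexp.const_mul θ₀
    have hv : -θ t = θ₀ * -Real.exp (-t) := by rw [hθ]; ring
    rw [hv, funext hθ]
    exact h
  set D : ℝ := ⟪gradf (x t), x' t⟫ + β / 2 * (2 * ⟪A (x t) - b, A (x' t)⟫)
      + ⟪ls, A (x' t)⟫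
      + ((μβ - γ t) / 2 * ‖v t - xs‖ ^ 2 + γ t * ⟪v t - xs, v' t⟫)
      + (-θ t / 2 * ‖lam t - ls‖ ^ 2 + θ t * ⟪lam t - ls, lam' t⟫) with hD
  have hd' : HasDerivAt Efun D t := by
    rw [hEfun]
    have hbig := ((((h1.add (h2.const_mul (β / 2))).add h3).sub_const (f xs)).add
        ((hγd.div_const 2).mul h4)).add ((hθd.div_const 2).mul h6)
    convert hbig using 1
    · rfl
    · rfl
    · rfl
    rw [hD]; ring
  have hdD : d = D := hd.unique hd'
  subst hdD
  have hθs : θ t * ⟪lam t - ls, lam' t⟫ = ⟪lam t - ls, A (v t) - b⟫ := by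
    rw [← real_inner_smul_right, hode1 t ht]
  have hγs : γ t * ⟪v t - xs, v' t⟫ = ⟪v t - xs, μβ • (x t - v t) -
      (gradf (x t) + β • (ContinuousLinearMap.adjoint A) (A (x t) - b)
        + (ContinuousLinearMap.adjoint A) (lam t))⟫ := by
    rw [← real_inner_smul_right, hode3 t ht]
  have hveq : v t - xs = x' t + (x t - xs) := by rw [hode2 t ht]; abel
  have hxv : x t - v t = -(x' t) := by rw [hode2 t ht]; abel
  have hb : A (x t) - b = A (x t) - A xs := by rw [hKKT1]
  have E1 : ⟪v t - xs, μβ • (x t - v t) -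
      (gradf (x t) + β • (ContinuousLinearMap.adjoint A) (A (x t) - b)
        + (ContinuousLinearMap.adjoint A) (lam t))⟫
      = -(μβ * ‖x' t‖ ^ 2) - μβ * ⟪x t - xs, x' t⟫
        - (⟪gradf (x t), x' t⟫ + β * ⟪A (x t) - b, A (x' t)⟫ + ⟪lam t, A (x' t)⟫)
        - (⟪gradf (x t), x t - xs⟫ + β * ‖A (x t) - b‖ ^ 2 + ⟪lam t, A (x t) - b⟫) := by
    rw [hb, hveq, hxv]
    exact inner_expand_aux A (gradf (x t)) (x t) xs (x' t) (lam t) μβ β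
  have E2 : ⟪lam t - ls, A (v t) - b⟫
      = ⟪lam t, A (x' t)⟫ + ⟪lam t, A (x t) - b⟫ - ⟪ls, A (x' t)⟫
        - ⟪ls, A (x t) - b⟫ := by
    have hAv : A (v t) - b = A (x' t) + (A (x t) - b) := by
      have : v t = x' t + x t := by rw [hode2 t ht]; abel
      rw [this, map_add]; abel
    rw [hAv]
    simp only [inner_sub_left, inner_add_right]
    ring
  have E3 : ‖v t - xs‖ ^ 2 = ‖x' t‖ ^ 2 + 2 * ⟪x t - xs, x' t⟫ + ‖x t - xs‖ ^ 2 := by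
    rw [hveq, norm_add_sq_real, real_inner_comm]
  have I1 : f (x t) - f xs + μ / 2 * ‖x t - xs‖ ^ 2 - ⟪gradf (x t), x t - xs⟫ ≤ 0 := by
    have h := hconv (x t) xs
    have h1 : xs - x t = -(x t - xs) := by abel
    rw [h1, inner_neg_right, norm_neg] at h
    linarith
  have I2 : β * (sigmaMin A ^ 2 * ‖x t - xs‖ ^ 2) ≤ β * ‖A (x t) - b‖ ^ 2 := by
    have h3 : A (x t) - b = A (x t - xs) := by rw [map_sub, hKKT1]
    rw [h3]
    have h := sigmaMin_mul_le A (x t - xs)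
    have hσ := sigmaMin_nonneg A
    have hn : (0:ℝ) ≤ ‖x t - xs‖ := norm_nonneg _
    have hsq : sigmaMin A ^ 2 * ‖x t - xs‖ ^ 2 ≤ ‖A (x t - xs)‖ ^ 2 := by
      nlinarith [mul_self_le_mul_self (mul_nonneg hσ hn) h]
    exact mul_le_mul_of_nonneg_left hsq hβ
  rw [hE t, hLβ, hLβ, hAxs]
  simp only [norm_zero, inner_zero_right]
  rw [hD, hθs, hγs, E1, E2, E3, hμβ]
  linarith [I1, I2]
end

section
/- Let (λ_k, x_k, v_k) be generated by the fully implicit scheme with arbitrary step sizes α_k > 0: θ_k(λ_{k+1} − λ_k)/α_k = A v_{k+1} − b; (x_{k+1} − x_k)/α_k = v_{k+1} − x_{k+1}; and γ_k(v_{k+1} − v_k)/α_k = μ_β(x_{k+1} − v_{k+1}) − (ξ_{k+1} + Aᵀλ_{k+1}) for some ξ_{k+1} ∈ ∂f_β(x_{k+1}) + N_X(x_{k+1}), with x₀ ∈ X, v₀ ∈ ℝⁿ, and parameters θ_{k+1} = θ_k/(1+α_k), γ_{k+1} = (γ_k + μ_β α_k)/(1+α_k), θ₀ = 1, γ₀ >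 0. Define the discrete Lyapunov function E_k = L_β(x_k, λ*) − L_β(x*, λ_k) + (γ_k/2)‖v_k − x*‖² + (θ_k/2)‖λ_k − λ*‖². Then x_k ∈ X for all k and E_{k+1} − E_k ≤ −α_k E_{k+1} for all k ∈ ℕ. -/
open scoped RealInnerProductSpace Pointwise

/-- The convex subdifferential. -/
def subdiff {n : ℕ} (f : EuclideanSpace ℝ (Fin n) → ℝ)
    (x : EuclideanSpace ℝ (Fin n)) : Set (EuclideanSpace ℝ (Fin n)) :=
  {p | ∀ y, f x + ⟪p, y - x⟫ ≤ f y}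

/-- The normal cone of `X` at `x` (empty if `x ∉ X`). -/
def normalCone {n : ℕ} (X : Set (EuclideanSpace ℝ (Fin n)))
    (x : EuclideanSpace ℝ (Fin n)) : Set (EuclideanSpace ℝ (Fin n)) :=
  {p | x ∈ X ∧ ∀ z ∈ X, ⟪p, z - x⟫ ≤ 0}

lemma sigmaMin_sq_le {n m : ℕ} (A : EuclideanSpace ℝ (Fin n) →L[ℝ] EuclideanSpace ℝ (Fin m))
    (u : EuclideanSpace ℝ (Fin n)) : sigmaMin A ^ 2 * ‖u‖ ^ 2 ≤ ‖A u‖ ^ 2 := by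
  rcases eq_or_ne u 0 with h | h
  · simp [h]
  · have hu : (0:ℝ) < ‖u‖ := norm_pos_iff.mpr h
    have hmem : ‖A (‖u‖⁻¹ • u)‖ ∈ {c : ℝ | ∃ x : EuclideanSpace ℝ (Fin n), ‖x‖ = 1 ∧ ‖A x‖ = c} :=
      ⟨‖u‖⁻¹ • u, by rw [norm_smul, norm_inv, norm_norm, inv_mul_cancel₀ hu.ne'], rfl⟩
    have hbdd : BddBelow {c : ℝ | ∃ x : EuclideanSpace ℝ (Fin n), ‖x‖ = 1 ∧ ‖A x‖ = c} :=
      ⟨0, fun c ⟨x, _, hx⟩ => hx ▸ norm_nonneg _⟩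
    have h1 : sigmaMin A ≤ ‖A (‖u‖⁻¹ • u)‖ := csInf_le hbdd hmem
    have h0 : 0 ≤ sigmaMin A := le_csInf ⟨_, hmem⟩ (fun c ⟨x, _, hx⟩ => hx ▸ norm_nonneg _)
    have h2 : ‖A (‖u‖⁻¹ • u)‖ = ‖u‖⁻¹ * ‖A u‖ := by
      rw [map_smul, norm_smul, norm_inv, norm_norm]
    have h3 : sigmaMin A * ‖u‖ ≤ ‖A u‖ := by
      rw [h2] at h1
      have := mul_le_mul_of_nonneg_right h1 hu.le
      calc sigmaMin A * ‖u‖ ≤ ‖u‖⁻¹ * ‖A u‖ * ‖u‖ := this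
        _ = ‖A u‖ := by field_simp
    have h4 := mul_self_le_mul_self (mul_nonneg h0 (norm_nonneg u)) h3
    nlinarith [h4]

lemma three_point {E : Type*} [NormedAddCommGroup E] [InnerProductSpace ℝ E] (u v w : E) :
    ‖u - w‖ ^ 2 = ‖v - w‖ ^ 2 + 2 * ⟪u - v, u - w⟫ - ‖u - v‖ ^ 2 := by
  have h := norm_sub_sq_real (u - w) (u - v)
  rw [show (u - w) - (u - v) = v - w by abel] at h
  linarith [h, real_inner_comm (u - w) (u - v)]

lemma subdiff_extract {n m : ℕ}
    {f fβ : EuclideanSpace ℝ (Fin n) → ℝ}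
    {A : EuclideanSpace ℝ (Fin n) →L[ℝ] EuclideanSpace ℝ (Fin m)}
    {b : EuclideanSpace ℝ (Fin m)} {β : ℝ}
    (hfcv : ConvexOn ℝ Set.univ f) (hβ : 0 ≤ β)
    (hfβ : ∀ z, fβ z = f z + β / 2 * ‖A z - b‖ ^ 2)
    {x p : EuclideanSpace ℝ (Fin n)} (hp : p ∈ subdiff fβ x) :
    p - β • (ContinuousLinearMap.adjoint A) (A x - b) ∈ subdiff f x := by
  intro y
  set d := y - x with hd
  have key : ∀ t : ℝ, 0 < t → t ≤ 1 →
      ⟪p, d⟫ - β * ⟪A x - b, A d⟫ - (f y - f x) ≤ t * (β / 2 * ‖A d‖ ^ 2) := by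
    intro t ht ht1
    have h1 := hp (x + t • d)
    have hsimp : x + t • d - x = t • d := by abel
    rw [hsimp, real_inner_smul_right] at h1
    have h2 : f (x + t • d) ≤ (1 - t) * f x + t * f y := by
      have hxy : x + t • d = (1 - t) • x + t • y := by
        rw [hd]; module
      have := hfcv.2 (Set.mem_univ x) (Set.mem_univ y)
        (show (0:ℝ) ≤ 1 - t by linarith) ht.le (by ring)
      rw [smul_eq_mul, smul_eq_mul] at this
      rw [hxy]; exact this
    have hAexp : ‖A (x + t • d) - b‖ ^ 2
        = ‖A x - b‖ ^ 2 + 2 * (t * ⟪A x - b, A d⟫) + t ^ 2 * ‖A d‖ ^ 2 := by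
      have hv : A (x + t • d) - b = (A x - b) + t • (A d) := by
        rw [map_add, map_smul]; abel
      rw [hv, norm_add_sq_real, real_inner_smul_right, norm_smul, Real.norm_eq_abs,
        mul_pow, sq_abs]
    have e1 : fβ (x + t • d) = f (x + t • d) + β / 2 * ‖A x - b‖ ^ 2
        + β * t * ⟪A x - b, A d⟫ + β * t ^ 2 / 2 * ‖A d‖ ^ 2 := by
      rw [hfβ, hAexp]; ring
    have e2 : fβ x = f x + β / 2 * ‖A x - b‖ ^ 2 := hfβ x
    rw [e1, e2] at h1
    have hcomb : t * (⟪p, d⟫ - β * ⟪A x - b, A d⟫ - (f y - f x))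
        ≤ t * (t * (β / 2 * ‖A d‖ ^ 2)) := by nlinarith [h1, h2]
    exact (mul_le_mul_iff_right₀ ht).mp hcomb
  have hB : (0:ℝ) ≤ β / 2 * ‖A d‖ ^ 2 := by positivity
  set C := ⟪p, d⟫ - β * ⟪A x - b, A d⟫ - (f y - f x) with hC
  set B := β / 2 * ‖A d‖ ^ 2 with hBdef
  have hC0 : C ≤ 0 := by
    by_contra hcon
    push_neg at hcon
    have ht0 : 0 < min 1 (C / (B + 1)) := lt_min one_pos (div_pos hcon (by linarith))
    have hk := key _ ht0 (min_le_left _ _)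
    have h₂ : min 1 (C / (B + 1)) * B ≤ (C / (B + 1)) * B :=
      mul_le_mul_of_nonneg_right (min_le_right _ _) hB
    have h₃ : (C / (B + 1)) * B < C := by
      rw [div_mul_eq_mul_div, div_lt_iff₀ (by linarith)]
      nlinarith
    linarith
  have hadj : ⟪(ContinuousLinearMap.adjoint A) (A x - b), d⟫ = ⟪A x - b, A d⟫ :=
    ContinuousLinearMap.adjoint_inner_left _ _ _
  show f x + ⟪p - β • (ContinuousLinearMap.adjoint A) (A x - b), d⟫ ≤ f y
  rw [inner_sub_left, real_inner_smul_left, hadj]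
  rw [hC] at hC0
  linarith

lemma fβ_strong {n m : ℕ} {X : Set (EuclideanSpace ℝ (Fin n))}
    {f fβ : EuclideanSpace ℝ (Fin n) → ℝ}
    {A : EuclideanSpace ℝ (Fin n) →L[ℝ] EuclideanSpace ℝ (Fin m)}
    {b : EuclideanSpace ℝ (Fin m)} {μ β μβ : ℝ}
    (hfcv : ConvexOn ℝ Set.univ f) (hμ : 0 ≤ μ) (hβ : 0 ≤ β)
    (hμβ : μβ = μ + β * sigmaMin A ^ 2)
    (hsc : ∀ x ∈ X, ∀ y ∈ X, ∀ p ∈ subdiff f x,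
      f x + ⟪p, y - x⟫ + μ / 2 * ‖y - x‖ ^ 2 ≤ f y)
    (hfβ : ∀ z, fβ z = f z + β / 2 * ‖A z - b‖ ^ 2)
    {x y p : EuclideanSpace ℝ (Fin n)} (hx : x ∈ X) (hy : y ∈ X) (hp : p ∈ subdiff fβ x) :
    fβ x + ⟪p, y - x⟫ + μβ / 2 * ‖y - x‖ ^ 2 ≤ fβ y := by
  have hp' := subdiff_extract hfcv hβ hfβ hp
  have hs := hsc x hx y hy _ hp'
  have hg : β / 2 * ‖A y - b‖ ^ 2
      = β / 2 * ‖A x - b‖ ^ 2 + β * ⟪A x - b, A (y - x)⟫ + β / 2 * ‖A (y - x)‖ ^ 2 := by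
    have hv : A y - b = (A x - b) + A (y - x) := by rw [map_sub]; abel
    rw [hv, norm_add_sq_real]; ring
  have hσ : β / 2 * (sigmaMin A ^ 2 * ‖y - x‖ ^ 2) ≤ β / 2 * ‖A (y - x)‖ ^ 2 :=
    mul_le_mul_of_nonneg_left (sigmaMin_sq_le A (y - x)) (by linarith)
  have hpd : ⟪p - β • (ContinuousLinearMap.adjoint A) (A x - b), y - x⟫
      = ⟪p, y - x⟫ - β * ⟪A x - b, A (y - x)⟫ := by
    rw [inner_sub_left, real_inner_smul_left, ContinuousLinearMap.adjoint_inner_left]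
  rw [hfβ x, hfβ y, hμβ]
  rw [hpd] at hs
  nlinarith [hs, hσ, hg]

set_option maxHeartbeats 2000000 in
/-- Theorem 3.1 (contraction part): the fully implicit scheme keeps the iterates in `X`
and the discrete Lyapunov function contracts unconditionally. -/
theorem implicit_scheme_contraction {n m : ℕ}
    (X : Set (EuclideanSpace ℝ (Fin n)))
    (hXne : X.Nonempty) (hXcl : IsClosed X) (hXcv : Convex ℝ X)
    (f : EuclideanSpace ℝ (Fin n) → ℝ)
    (hfcv : ConvexOn ℝ Set.univ f)
    (A : EuclideanSpace ℝ (Fin n) →L[ℝ] EuclideanSpace ℝ (Fin m))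
    (b : EuclideanSpace ℝ (Fin m))
    (μ β μβ : ℝ) (hμ : 0 ≤ μ) (hβ : 0 ≤ β)
    (hμβ : μβ = μ + β * sigmaMin A ^ 2)
    (hsc : ∀ x ∈ X, ∀ y ∈ X, ∀ p ∈ subdiff f x,
      f x + ⟪p, y - x⟫ + μ / 2 * ‖y - x‖ ^ 2 ≤ f y)
    (fβ : EuclideanSpace ℝ (Fin n) → ℝ)
    (hfβ : ∀ z, fβ z = f z + β / 2 * ‖A z - b‖ ^ 2)
    (Lβ : EuclideanSpace ℝ (Fin n) → EuclideanSpace ℝ (Fin m) → ℝ)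
    (hLβ : ∀ z w, Lβ z w = fβ z + ⟪w, A z - b⟫)
    (xs : EuclideanSpace ℝ (Fin n)) (ls : EuclideanSpace ℝ (Fin m))
    (hxs : xs ∈ X) (hKKT1 : A xs = b)
    (hKKT2 : ∃ p ∈ subdiff f xs, ∃ q ∈ normalCone X xs,
      p + q + (ContinuousLinearMap.adjoint A) ls = 0)
    (θ γ α : ℕ → ℝ)
    (hα : ∀ k, 0 < α k) (hθ0 : θ 0 = 1) (hγ0 : 0 < γ 0)
    (hθ : ∀ k, θ (k + 1) = θ k / (1 + α k))
    (hγ : ∀ k, γ (k + 1) = (γ k + μβ * α k) / (1 + α k))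
    (lam : ℕ → EuclideanSpace ℝ (Fin m))
    (x v : ℕ → EuclideanSpace ℝ (Fin n))
    (hx0 : x 0 ∈ X)
    (hdual : ∀ k, (θ k / α k) • (lam (k + 1) - lam k) = A (v (k + 1)) - b)
    (hprim : ∀ k, (α k)⁻¹ • (x (k + 1) - x k) = v (k + 1) - x (k + 1))
    (hvup : ∀ k, ∃ ξ ∈ subdiff fβ (x (k + 1)) + normalCone X (x (k + 1)),
      (γ k / α k) • (v (k + 1) - v k) =
        μβ • (x (k + 1) - v (k + 1)) -
          (ξ + (ContinuousLinearMap.adjoint A) (lam (k + 1))))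
    (Ef : ℕ → ℝ)
    (hEf : ∀ k, Ef k = Lβ (x k) ls - Lβ xs (lam k)
      + γ k / 2 * ‖v k - xs‖ ^ 2 + θ k / 2 * ‖lam k - ls‖ ^ 2) :
    (∀ k, x k ∈ X) ∧ ∀ k, Ef (k + 1) - Ef k ≤ -(α k * Ef (k + 1)) := by
  have hμβ0 : 0 ≤ μβ := by
    have h1 : 0 ≤ β * sigmaMin A ^ 2 := mul_nonneg hβ (sq_nonneg _)
    rw [hμβ]; linarith
  -- x stays in X
  have hxX : ∀ k, x k ∈ X := by
    intro k
    cases k with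
    | zero => exact hx0
    | succ j =>
      obtain ⟨ξ, hξ, _⟩ := hvup j
      rw [Set.mem_add] at hξ
      obtain ⟨p, hp, q, hq, _⟩ := hξ
      exact hq.1
  refine ⟨hxX, ?_⟩
  -- positivity of θ and γ
  have hθpos : ∀ k, 0 < θ k := by
    intro k
    induction k with
    | zero => rw [hθ0]; norm_num
    | succ j ih => rw [hθ j]; exact div_pos ih (by linarith [hα j])
  have hγpos : ∀ k, 0 < γ k := by
    intro k
    induction k with
    | zero => exact hγ0
    | succ j ih =>
      rw [hγ j]
      have : 0 ≤ μβ * α j := mul_nonneg hμβ0 (hα j).le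
      exact div_pos (by linarith) (by linarith [hα j])
  -- the Lagrangian at xs is constant in λ
  have hLs : ∀ l, Lβ xs l = fβ xs := by
    intro l; rw [hLβ, hKKT1, sub_self, inner_zero_right, add_zero]
  -- key primal inequality
  have key : ∀ z p q, p ∈ subdiff fβ z → q ∈ normalCone X z → ∀ y ∈ X,
      ∀ l : EuclideanSpace ℝ (Fin m),
      ⟪p + q + (ContinuousLinearMap.adjoint A) l, y - z⟫
        ≤ Lβ y l - Lβ z l - μβ / 2 * ‖y - z‖ ^ 2 := by
    intro z p q hp hq y hy l
    have h1 : fβ z + ⟪p, y - z⟫ + μβ / 2 * ‖y - z‖ ^ 2 ≤ fβ y :=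
      fβ_strong hfcv hμ hβ hμβ hsc hfβ hq.1 hy hp
    have h2 : ⟪q, y - z⟫ ≤ 0 := hq.2 y hy
    have h3 : ⟪(ContinuousLinearMap.adjoint A) l, y - z⟫ = ⟪l, A y - b⟫ - ⟪l, A z - b⟫ := by
      rw [ContinuousLinearMap.adjoint_inner_left, map_sub,
        show A y - A z = (A y - b) - (A z - b) by abel, inner_sub_right]
    rw [inner_add_left, inner_add_left, hLβ, hLβ, h3]
    linarith
  intro k
  have ha := hα k
  have ha' : α k ≠ 0 := ha.ne'
  have ha1 : (0:ℝ) < 1 + α k := by linarith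
  obtain ⟨ξ, hξ, hveq⟩ := hvup k
  rw [Set.mem_add] at hξ
  obtain ⟨p, hp, q, hq, hpq⟩ := hξ
  rw [← hpq] at hveq
  -- dual step scalarized
  have hθ1 : θ k * ⟪lam (k + 1) - lam k, lam (k + 1) - ls⟫
      = α k * ⟪A (v (k + 1)) - b, lam (k + 1) - ls⟫ := by
    have h := congrArg (fun z => ⟪z, lam (k + 1) - ls⟫) (hdual k)
    simp only [real_inner_smul_left] at h
    rw [div_mul_eq_mul_div, div_eq_iff ha'] at h
    linear_combination h
  -- velocity step scalarized
  have h7 : γ k * ⟪v (k + 1) - v k, v (k + 1) - xs⟫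
      = μβ * α k * ⟪x (k + 1) - v (k + 1), v (k + 1) - xs⟫
        - α k * ⟪p + q + (ContinuousLinearMap.adjoint A) (lam (k + 1)), v (k + 1) - xs⟫ := by
    have h : ⟪(γ k / α k) • (v (k + 1) - v k), v (k + 1) - xs⟫
        = ⟪μβ • (x (k + 1) - v (k + 1)), v (k + 1) - xs⟫
          - ⟪p + q + (ContinuousLinearMap.adjoint A) (lam (k + 1)), v (k + 1) - xs⟫ := by
      rw [hveq, inner_sub_left]
    rw [real_inner_smul_left, real_inner_smul_left, div_mul_eq_mul_div,
      div_eq_iff ha'] at h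
    linear_combination h
  -- three-point identities
  have hθid : θ k / 2 * ‖lam (k + 1) - ls‖ ^ 2
      = θ k / 2 * ‖lam k - ls‖ ^ 2
        + θ k * ⟪lam (k + 1) - lam k, lam (k + 1) - ls⟫
        - θ k / 2 * ‖lam (k + 1) - lam k‖ ^ 2 := by
    linear_combination (θ k / 2) * three_point (lam (k + 1)) (lam k) ls
  have hγid : (γ k + μβ * α k) / 2 * ‖v (k + 1) - xs‖ ^ 2
      = γ k / 2 * ‖v k - xs‖ ^ 2
        + γ k * ⟪v (k + 1) - v k, v (k + 1) - xs⟫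
        - γ k / 2 * ‖v (k + 1) - v k‖ ^ 2
        + μβ * α k / 2 * ‖v (k + 1) - xs‖ ^ 2 := by
    linear_combination (γ k / 2) * three_point (v (k + 1)) (v k) xs
  have hDpos : 0 ≤ θ k / 2 * ‖lam (k + 1) - lam k‖ ^ 2 :=
    mul_nonneg (by linarith [hθpos k]) (sq_nonneg _)
  have hWpos : 0 ≤ γ k / 2 * ‖v (k + 1) - v k‖ ^ 2 :=
    mul_nonneg (by linarith [hγpos k]) (sq_nonneg _)
  -- x update relation as vector identity
  have hpvec : x (k + 1) - x k = α k • (v (k + 1) - x (k + 1)) := by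
    rw [← hprim k, smul_smul, mul_inv_cancel₀ ha', one_smul]
  -- dual term rearrangement
  have h4 : α k * ⟪A (v (k + 1)) - b, lam (k + 1) - ls⟫
      = ⟪A (x (k + 1)) - b, lam (k + 1) - ls⟫ - ⟪A (x k) - b, lam (k + 1) - ls⟫
        + α k * ⟪A (x (k + 1)) - b, lam (k + 1) - ls⟫ := by
    have hxv : A (x (k + 1)) - A (x k) = α k • (A (v (k + 1)) - A (x (k + 1))) := by
      rw [← map_sub, hpvec, map_smul, map_sub]
    have hJa : ⟪A (v (k + 1)) - b, lam (k + 1) - ls⟫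
        = ⟪A (v (k + 1)) - A (x (k + 1)), lam (k + 1) - ls⟫
          + ⟪A (x (k + 1)) - b, lam (k + 1) - ls⟫ := by
      rw [← inner_add_left, sub_add_sub_cancel]
    have hJb : α k * ⟪A (v (k + 1)) - A (x (k + 1)), lam (k + 1) - ls⟫
        = ⟪A (x (k + 1)) - b, lam (k + 1) - ls⟫ - ⟪A (x k) - b, lam (k + 1) - ls⟫ := by
      rw [← real_inner_smul_left, ← hxv, ← inner_sub_left]
      congr 1
      abel
    linear_combination α k * hJa + hJb
  -- strong-convexity quadratic bound for the v-update
  have h6 : μβ * α k * ⟪x (k + 1) - v (k + 1), v (k + 1) - xs⟫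
      + μβ * α k / 2 * ‖v (k + 1) - xs‖ ^ 2 ≤ μβ * α k / 2 * ‖xs - x (k + 1)‖ ^ 2 := by
    have hid := norm_add_sq_real (x (k + 1) - v (k + 1)) (v (k + 1) - xs)
    rw [sub_add_sub_cancel] at hid
    have hrev : ‖xs - x (k + 1)‖ ^ 2 = ‖x (k + 1) - xs‖ ^ 2 := by rw [norm_sub_rev]
    have hc : 0 ≤ μβ * α k / 2 := by
      have := mul_nonneg hμβ0 ha.le
      linarith
    have hpos : 0 ≤ μβ * α k / 2 * ‖x (k + 1) - v (k + 1)‖ ^ 2 :=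
      mul_nonneg hc (sq_nonneg _)
    have e6 : μβ * α k * ⟪x (k + 1) - v (k + 1), v (k + 1) - xs⟫
        + μβ * α k / 2 * ‖v (k + 1) - xs‖ ^ 2
        = μβ * α k / 2 * ‖xs - x (k + 1)‖ ^ 2
          - μβ * α k / 2 * ‖x (k + 1) - v (k + 1)‖ ^ 2 := by
      linear_combination (-(μβ * α k / 2)) * hid + (-(μβ * α k / 2)) * hrev
    linarith [e6, hpos]
  -- split the w-inner-product via the primal step
  have h9 : α k * ⟪p + q + (ContinuousLinearMap.adjoint A) (lam (k + 1)), v (k + 1) - xs⟫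
      = ⟪p + q + (ContinuousLinearMap.adjoint A) (lam (k + 1)), x (k + 1) - x k⟫
        - α k * ⟪p + q + (ContinuousLinearMap.adjoint A) (lam (k + 1)), xs - x (k + 1)⟫ := by
    have h9a : ⟪p + q + (ContinuousLinearMap.adjoint A) (lam (k + 1)), v (k + 1) - xs⟫
        = ⟪p + q + (ContinuousLinearMap.adjoint A) (lam (k + 1)), v (k + 1) - x (k + 1)⟫
          + ⟪p + q + (ContinuousLinearMap.adjoint A) (lam (k + 1)), x (k + 1) - xs⟫ := by
      rw [← inner_add_right, sub_add_sub_cancel]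
    have h9b : α k * ⟪p + q + (ContinuousLinearMap.adjoint A) (lam (k + 1)),
        v (k + 1) - x (k + 1)⟫
        = ⟪p + q + (ContinuousLinearMap.adjoint A) (lam (k + 1)), x (k + 1) - x k⟫ := by
      rw [← hprim k, real_inner_smul_right, ← mul_assoc, mul_inv_cancel₀ ha', one_mul]
    have h9c : ⟪p + q + (ContinuousLinearMap.adjoint A) (lam (k + 1)), x (k + 1) - xs⟫
        = -⟪p + q + (ContinuousLinearMap.adjoint A) (lam (k + 1)), xs - x (k + 1)⟫ := by
      rw [show x (k + 1) - xs = -(xs - x (k + 1)) by abel, inner_neg_right]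
    linear_combination α k * h9a + h9b + α k * h9c
  -- flip sign of the x-difference inner product
  have h12 : ⟪p + q + (ContinuousLinearMap.adjoint A) (lam (k + 1)), x (k + 1) - x k⟫
      = -⟪p + q + (ContinuousLinearMap.adjoint A) (lam (k + 1)), x k - x (k + 1)⟫ := by
    rw [show x (k + 1) - x k = -(x k - x (k + 1)) by abel, inner_neg_right]
  -- Lagrangian conversions
  have hL1 : Lβ (x k) (lam (k + 1))
      = Lβ (x k) ls + ⟪A (x k) - b, lam (k + 1) - ls⟫ := by
    have e : ⟪A (x k) - b, lam (k + 1) - ls⟫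
        = ⟪A (x k) - b, lam (k + 1)⟫ - ⟪A (x k) - b, ls⟫ := inner_sub_right _ _ _
    rw [hLβ, hLβ]
    linarith [e, real_inner_comm (A (x k) - b) (lam (k + 1)), real_inner_comm (A (x k) - b) ls]
  have hL2 : Lβ (x (k + 1)) (lam (k + 1))
      = Lβ (x (k + 1)) ls + ⟪A (x (k + 1)) - b, lam (k + 1) - ls⟫ := by
    have e : ⟪A (x (k + 1)) - b, lam (k + 1) - ls⟫
        = ⟪A (x (k + 1)) - b, lam (k + 1)⟫ - ⟪A (x (k + 1)) - b, ls⟫ := inner_sub_right _ _ _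
    rw [hLβ, hLβ]
    linarith [e, real_inner_comm (A (x (k + 1)) - b) (lam (k + 1)),
      real_inner_comm (A (x (k + 1)) - b) ls]
  -- key inequality at y = xs
  have h10 : α k * ⟪p + q + (ContinuousLinearMap.adjoint A) (lam (k + 1)), xs - x (k + 1)⟫
      ≤ α k * fβ xs - α k * Lβ (x (k + 1)) ls
        - α k * ⟪A (x (k + 1)) - b, lam (k + 1) - ls⟫
        - μβ * α k / 2 * ‖xs - x (k + 1)‖ ^ 2 := by
    have hk1 := key (x (k + 1)) p q hp hq xs hxs (lam (k + 1))
    rw [hLs, hL2] at hk1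
    calc α k * ⟪p + q + (ContinuousLinearMap.adjoint A) (lam (k + 1)), xs - x (k + 1)⟫
        ≤ α k * (fβ xs - (Lβ (x (k + 1)) ls + ⟪A (x (k + 1)) - b, lam (k + 1) - ls⟫)
            - μβ / 2 * ‖xs - x (k + 1)‖ ^ 2) := mul_le_mul_of_nonneg_left hk1 ha.le
      _ = α k * fβ xs - α k * Lβ (x (k + 1)) ls
            - α k * ⟪A (x (k + 1)) - b, lam (k + 1) - ls⟫
            - μβ * α k / 2 * ‖xs - x (k + 1)‖ ^ 2 := by ring
  -- key inequality at y = x k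
  have h11 : ⟪p + q + (ContinuousLinearMap.adjoint A) (lam (k + 1)), x k - x (k + 1)⟫
      ≤ Lβ (x k) ls + ⟪A (x k) - b, lam (k + 1) - ls⟫
        - Lβ (x (k + 1)) ls - ⟪A (x (k + 1)) - b, lam (k + 1) - ls⟫ := by
    have hk2 := key (x (k + 1)) p q hp hq (x k) (hxX k) (lam (k + 1))
    rw [hL1, hL2] at hk2
    have hnn : 0 ≤ μβ / 2 * ‖x k - x (k + 1)‖ ^ 2 :=
      mul_nonneg (by linarith) (sq_nonneg _)
    linarith
  -- Lyapunov values
  have hE1 : Ef (k + 1) = Lβ (x (k + 1)) ls - fβ xs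
      + γ (k + 1) / 2 * ‖v (k + 1) - xs‖ ^ 2 + θ (k + 1) / 2 * ‖lam (k + 1) - ls‖ ^ 2 := by
    rw [hEf, hLs]
  have hE0 : Ef k = Lβ (x k) ls - fβ xs
      + γ k / 2 * ‖v k - xs‖ ^ 2 + θ k / 2 * ‖lam k - ls‖ ^ 2 := by
    rw [hEf, hLs]
  have hth : θ (k + 1) * (1 + α k) = θ k := by
    rw [hθ k]; field_simp
  have hgm : γ (k + 1) * (1 + α k) = γ k + μβ * α k := by
    rw [hγ k]; field_simp
  have hmul : (1 + α k) * Ef (k + 1)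
      = (1 + α k) * (Lβ (x (k + 1)) ls - fβ xs)
        + (γ k + μβ * α k) / 2 * ‖v (k + 1) - xs‖ ^ 2
        + θ k / 2 * ‖lam (k + 1) - ls‖ ^ 2 := by
    rw [hE1, ← hth, ← hgm]; ring
  linarith [hθid, hθ1, hDpos, h4, hγid, h6, h7, hWpos, h9, h10, h11, h12, hmul, hE0]
end

section
/- Suppose the sequences (λ_k), (x_k), (v_k), (θ_k), (α_k) satisfy, for all k ∈ ℕ, the dual update λ_{k+1} = λ_k + (α_k/θ_k)(A v_{k+1} − b), the primal update (x_{k+1} − x_k)/α_k = v_{k+1} − x_{k+1}, and θ_{k+1} = θ_k/(1+α_k) with α_k > 0 and θ₀ = 1. Then the quantity λ_k − θ_k^{−1}(Ax_k − b) is invariant: λ_k − θ_k^{−1}(Ax_k − b) = λ₀ − (Ax₀ − b) for all k ∈ ℕ; consequently ‖Ax_k − b‖ = θ_k‖λ_k − λ₀ + (Ax₀ − b)‖. -/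
/-- Invariance of `λ_k − θ_k⁻¹(Ax_k − b)` along the primal-dual updates
(equations (3.18)–(3.19) of the paper). -/
theorem dual_feasibility_invariant {n m : ℕ}
    (A : EuclideanSpace ℝ (Fin n) →L[ℝ] EuclideanSpace ℝ (Fin m))
    (b : EuclideanSpace ℝ (Fin m))
    (lam : ℕ → EuclideanSpace ℝ (Fin m))
    (x v : ℕ → EuclideanSpace ℝ (Fin n))
    (θ α : ℕ → ℝ)
    (hα : ∀ k, 0 < α k) (hθ0 : θ 0 = 1)
    (hθ : ∀ k, θ (k + 1) = θ k / (1 + α k))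
    (hlam : ∀ k, lam (k + 1) = lam k + (α k / θ k) • (A (v (k + 1)) - b))
    (hprim : ∀ k, (α k)⁻¹ • (x (k + 1) - x k) = v (k + 1) - x (k + 1)) :
    ∀ k, lam k - (θ k)⁻¹ • (A (x k) - b) = lam 0 - (A (x 0) - b) ∧
      ‖A (x k) - b‖ = θ k * ‖lam k - lam 0 + (A (x 0) - b)‖ := by
  have θpos : ∀ k, 0 < θ k := by
    intro k
    induction k with
    | zero => rw [hθ0]; norm_num
    | succ k ih =>
      rw [hθ]
      have := hα k
      positivity
  have inv : ∀ k, lam k - (θ k)⁻¹ • (A (x k) - b) = lam 0 - (A (x 0) - b) := by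
    intro k
    induction k with
    | zero => rw [hθ0]; simp
    | succ k ih =>
      have hv : v (k + 1) = x (k + 1) + (α k)⁻¹ • (x (k + 1) - x k) := by
        rw [hprim k]; abel
      have hθk := (θpos k).ne'
      have hαk := (hα k).ne'
      have hαp := hα k
      have h1α : (1 : ℝ) + α k ≠ 0 := by positivity
      rw [← ih, hlam, hθ, hv]
      simp only [map_add, map_smul, map_sub]
      match_scalars
      all_goals (field_simp; try ring)
      all_goals exact Or.inl trivial
  intro k
  refine ⟨inv k, ?_⟩
  have h : lam k - lam 0 + (A (x 0) - b) = (θ k)⁻¹ • (A (x k) - b) := by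
    have := inv k
    rw [sub_eq_sub_iff_sub_eq_sub] at this
    rw [this]; abel
  rw [h, norm_smul, Real.norm_eq_abs, abs_inv, abs_of_pos (θpos k),
    mul_inv_cancel_left₀ (θpos k).ne']
end

section
/- Let (λ_k, x_k, v_k) be generated by the semi-implicit scheme: θ_k(λ_{k+1} − λ_k)/α_k = A v_{k+1} − b; (x_{k+1} − x_k)/α_k = v_{k+1} − x_{k+1}; γ_k(v_{k+1} − v_k)/α_k = μ_β(x_{k+1} − v_{k+1}) − (ξ_{k+1} + Aᵀλ̂_k) with ξ_{k+1} ∈ ∂f_β(x_{k+1}) + N_X(x_{k+1}) and λ̂_k = λ_k + (α_k/θ_k)(A v_k − b), with x₀ ∈ X, v₀ ∈ ℝⁿ, θ_{k+1} = θ_k/(1+α_k), γ_{k+1} = (γ_k + μ_β α_k)/(1+α_k), θ₀ = 1, γ₀ > 0, and step sizes chosen so that γ_k θ_k = ‖A‖² α_k². Define E_k = L_β(x_k, λ*) − L_β(x*, λ_k) + (γ_k/2)‖v_k − x*‖² + (θ_k/2)‖λ_k − λ*‖². Then x_k ∈ X for all k and E_{k+1} − E_k ≤ −α_k E_{k+1}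 for all k ∈ ℕ. -/
open scoped RealInnerProductSpace Pointwise

set_option maxHeartbeats 2000000 in
/-- Theorem 4.1 (contraction part): the semi-implicit scheme (4.2) with step size
`γ_k θ_k = ‖A‖² α_k²` keeps the iterates in `X` and the Lyapunov function contracts. -/
theorem semi_implicit_scheme_contraction {n m : ℕ}
    (X : Set (EuclideanSpace ℝ (Fin n)))
    (hXne : X.Nonempty) (hXcl : IsClosed X) (hXcv : Convex ℝ X)
    (f : EuclideanSpace ℝ (Fin n) → ℝ)
    (hfcv : ConvexOn ℝ Set.univ f)
    (A : EuclideanSpace ℝ (Fin n) →L[ℝ] EuclideanSpace ℝ (Fin m))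
    (b : EuclideanSpace ℝ (Fin m)) (hA : 0 < ‖A‖)
    (μ β μβ : ℝ) (hμ : 0 ≤ μ) (hβ : 0 ≤ β)
    (hμβ : μβ = μ + β * sigmaMin A ^ 2)
    (hsc : ∀ x ∈ X, ∀ y ∈ X, ∀ p ∈ subdiff f x,
      f x + ⟪p, y - x⟫ + μ / 2 * ‖y - x‖ ^ 2 ≤ f y)
    (fβ : EuclideanSpace ℝ (Fin n) → ℝ)
    (hfβ : ∀ z, fβ z = f z + β / 2 * ‖A z - b‖ ^ 2)
    (Lβ : EuclideanSpace ℝ (Fin n) → EuclideanSpace ℝ (Fin m) → ℝ)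
    (hLβ : ∀ z w, Lβ z w = fβ z + ⟪w, A z - b⟫)
    (xs : EuclideanSpace ℝ (Fin n)) (ls : EuclideanSpace ℝ (Fin m))
    (hxs : xs ∈ X) (hKKT1 : A xs = b)
    (hKKT2 : ∃ p ∈ subdiff f xs, ∃ q ∈ normalCone X xs,
      p + q + (ContinuousLinearMap.adjoint A) ls = 0)
    (θ γ α : ℕ → ℝ)
    (hα : ∀ k, 0 < α k) (hθ0 : θ 0 = 1) (hγ0 : 0 < γ 0)
    (hθ : ∀ k, θ (k + 1) = θ k / (1 + α k))
    (hγ : ∀ k, γ (k + 1) = (γ k + μβ * α k) / (1 + α k))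
    (lam : ℕ → EuclideanSpace ℝ (Fin m))
    (x v : ℕ → EuclideanSpace ℝ (Fin n))
    (hx0 : x 0 ∈ X)
    (hdual : ∀ k, (θ k / α k) • (lam (k + 1) - lam k) = A (v (k + 1)) - b)
    (hprim : ∀ k, (α k)⁻¹ • (x (k + 1) - x k) = v (k + 1) - x (k + 1))
    (lamhat : ℕ → EuclideanSpace ℝ (Fin m))
    (hlamhat : ∀ k, lamhat k = lam k + (α k / θ k) • (A (v k) - b))
    (hvup : ∀ k, ∃ ξ ∈ subdiff fβ (x (k + 1)) + normalCone X (x (k + 1)),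
      (γ k / α k) • (v (k + 1) - v k) =
        μβ • (x (k + 1) - v (k + 1)) -
          (ξ + (ContinuousLinearMap.adjoint A) (lamhat k)))
    (hstep : ∀ k, γ k * θ k = ‖A‖ ^ 2 * α k ^ 2)
    (Ef : ℕ → ℝ)
    (hEf : ∀ k, Ef k = Lβ (x k) ls - Lβ xs (lam k)
      + γ k / 2 * ‖v k - xs‖ ^ 2 + θ k / 2 * ‖lam k - ls‖ ^ 2) :
    (∀ k, x k ∈ X) ∧ ∀ k, Ef (k + 1) - Ef k ≤ -(α k * Ef (k + 1)) := by
  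
  have hθpos : ∀ k, 0 < θ k := by
    intro k
    induction k with
    | zero => rw [hθ0]; norm_num
    | succ k ih => rw [hθ k]; exact div_pos ih (by linarith [hα k])
  have hμβ0 : 0 ≤ μβ := by
    rw [hμβ]
    have := mul_nonneg hβ (sq_nonneg (sigmaMin A))
    linarith
  -- smallest singular value inequality
  have hσ2 : ∀ w : EuclideanSpace ℝ (Fin n), sigmaMin A ^ 2 * ‖w‖ ^ 2 ≤ ‖A w‖ ^ 2 := by
    intro w
    rcases eq_or_ne w 0 with h | h
    · simp [h]
    · have hw : 0 < ‖w‖ := norm_pos_iff.mpr h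
      have hu1 : ‖(‖w‖⁻¹ • w : EuclideanSpace ℝ (Fin n))‖ = 1 := by
        rw [norm_smul, Real.norm_eq_abs, abs_of_pos (inv_pos.mpr hw), inv_mul_cancel₀ hw.ne']
      have hmem : ‖A (‖w‖⁻¹ • w)‖ ∈
          {c : ℝ | ∃ x : EuclideanSpace ℝ (Fin n), ‖x‖ = 1 ∧ ‖A x‖ = c} :=
        ⟨‖w‖⁻¹ • w, hu1, rfl⟩
      have hbdd : BddBelow {c : ℝ | ∃ x : EuclideanSpace ℝ (Fin n), ‖x‖ = 1 ∧ ‖A x‖ = c} := by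
        refine ⟨0, ?_⟩
        rintro c ⟨x, -, rfl⟩
        positivity
      have h1 : sigmaMin A ≤ ‖A (‖w‖⁻¹ • w)‖ := csInf_le hbdd hmem
      have h0 : 0 ≤ sigmaMin A := by
        refine le_csInf ⟨_, hmem⟩ ?_
        rintro c ⟨x, -, rfl⟩
        positivity
      have h2 : ‖A (‖w‖⁻¹ • w)‖ = ‖w‖⁻¹ * ‖A w‖ := by
        rw [map_smul, norm_smul, Real.norm_eq_abs, abs_of_pos (inv_pos.mpr hw)]
      rw [h2] at h1
      have h3 : sigmaMin A * ‖w‖ ≤ ‖A w‖ := by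
        have := mul_le_mul_of_nonneg_right h1 hw.le
        calc sigmaMin A * ‖w‖ ≤ ‖w‖⁻¹ * ‖A w‖ * ‖w‖ := this
          _ = ‖A w‖ := by field_simp
      have h4 := mul_le_mul h3 h3 (mul_nonneg h0 (norm_nonneg w)) (norm_nonneg (A w))
      nlinarith [h4]
  -- exact quadratic expansion of the penalty
  have gid : ∀ z y : EuclideanSpace ℝ (Fin n),
      β / 2 * ‖A y - b‖ ^ 2
        = β / 2 * ‖A z - b‖ ^ 2 + β * ⟪A z - b, A (y - z)⟫ + β / 2 * ‖A (y - z)‖ ^ 2 := by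
    intro z y
    have h : A y - b = (A z - b) + A (y - z) := by rw [map_sub]; abel
    rw [h, norm_add_sq_real]; ring
  -- strong subgradient inequality for fβ on X
  have key : ∀ z ∈ X, ∀ p ∈ subdiff fβ z, ∀ y ∈ X,
      fβ z + ⟪p, y - z⟫ + μβ / 2 * ‖y - z‖ ^ 2 ≤ fβ y := by
    intro z hz p hp y hy
    have hp' : ∀ y', fβ z + ⟪p, y' - z⟫ ≤ fβ y' := hp
    have hq' : (p - β • (ContinuousLinearMap.adjoint A) (A z - b)) ∈ subdiff f z := by
      show ∀ y', f z + ⟪p - β • (ContinuousLinearMap.adjoint A) (A z - b), y' - z⟫ ≤ f y'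
      intro y'
      have hq'e : ⟪p - β • (ContinuousLinearMap.adjoint A) (A z - b), y' - z⟫
          = ⟪p, y' - z⟫ - β * ⟪A z - b, A (y' - z)⟫ := by
        rw [inner_sub_left, real_inner_smul_left, ContinuousLinearMap.adjoint_inner_left]
      rw [hq'e]
      have hC0 : 0 ≤ β / 2 * ‖A (y' - z)‖ ^ 2 := by positivity
      have hstep' : ∀ t : ℝ, 0 < t → t ≤ 1 →
          f z + (⟪p, y' - z⟫ - β * ⟪A z - b, A (y' - z)⟫)
            ≤ f y' + t * (β / 2 * ‖A (y' - z)‖ ^ 2) := by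
        intro t ht0 ht1
        have hzt : z + t • (y' - z) = (1 - t) • z + t • y' := by module
        have hcv : f (z + t • (y' - z)) ≤ (1 - t) * f z + t * f y' := by
          rw [hzt]
          exact hfcv.2 (Set.mem_univ z) (Set.mem_univ y') (by linarith) ht0.le (by ring)
        have hsub := hp' (z + t • (y' - z))
        have e1 : (z + t • (y' - z)) - z = t • (y' - z) := by abel
        rw [e1, real_inner_smul_right] at hsub
        have e3 := gid z (z + t • (y' - z))
        rw [e1, map_smul, real_inner_smul_right, norm_smul, Real.norm_eq_abs,
          abs_of_pos ht0] at e3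
        rw [hfβ (z + t • (y' - z)), e3, hfβ z] at hsub
        have hfinal : t * (f z + (⟪p, y' - z⟫ - β * ⟪A z - b, A (y' - z)⟫))
            ≤ t * (f y' + t * (β / 2 * ‖A (y' - z)‖ ^ 2)) := by nlinarith [hsub, hcv]
        exact le_of_mul_le_mul_left hfinal ht0
      rcases eq_or_lt_of_le hC0 with hC' | hC'
      · have h := hstep' 1 one_pos le_rfl
        linarith
      · refine le_of_forall_pos_le_add fun ε hε => ?_
        have h := hstep' (min 1 (ε / (β / 2 * ‖A (y' - z)‖ ^ 2)))
          (lt_min one_pos (div_pos hε hC')) (min_le_left _ _)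
        have h2 : min 1 (ε / (β / 2 * ‖A (y' - z)‖ ^ 2)) * (β / 2 * ‖A (y' - z)‖ ^ 2) ≤ ε := by
          rw [← le_div_iff₀ hC']
          exact min_le_right _ _
        linarith
    have hf := hsc z hz y hy _ hq'
    have hg := gid z y
    have hinner : ⟪p - β • (ContinuousLinearMap.adjoint A) (A z - b), y - z⟫
        = ⟪p, y - z⟫ - β * ⟪A z - b, A (y - z)⟫ := by
      rw [inner_sub_left, real_inner_smul_left, ContinuousLinearMap.adjoint_inner_left]
    rw [hinner] at hf
    have hlow : β / 2 * (sigmaMin A ^ 2 * ‖y - z‖ ^ 2) ≤ β / 2 * ‖A (y - z)‖ ^ 2 :=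
      mul_le_mul_of_nonneg_left (hσ2 _) (by positivity)
    rw [hfβ y, hfβ z, hμβ]
    linarith [hf, hg, hlow]
  -- iterates stay in X
  have hXmem : ∀ k, x k ∈ X := by
    intro k
    cases k with
    | zero => exact hx0
    | succ j =>
      obtain ⟨ξ, hξmem, -⟩ := hvup j
      obtain ⟨p, hp, q, hq, hpq⟩ := Set.mem_add.mp hξmem
      exact hq.1
  refine ⟨hXmem, fun k => ?_⟩
  obtain ⟨ξ, hξmem, hV⟩ := hvup k
  obtain ⟨p, hp, q, hq, hpq⟩ := Set.mem_add.mp hξmem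
  have hx1 : x (k + 1) ∈ X := hq.1
  have ha := hα k
  have ht := hθpos k
  have h1a : (0:ℝ) < 1 + α k := by linarith
  -- strong inequality with ξ
  have hSξ : ∀ y ∈ X, fβ (x (k + 1)) + ⟪ξ, y - x (k + 1)⟫
      + μβ / 2 * ‖y - x (k + 1)‖ ^ 2 ≤ fβ y := by
    intro y hy
    have h1 := key _ hx1 p hp y hy
    have h2 := hq.2 y hy
    have h3 : ⟪ξ, y - x (k + 1)⟫ = ⟪p, y - x (k + 1)⟫ + ⟪q, y - x (k + 1)⟫ := by
      rw [← hpq, inner_add_left]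
    linarith
  -- vector identities
  have hprim' : x (k + 1) - x k = α k • (v (k + 1) - x (k + 1)) := by
    have h := hprim k
    calc x (k + 1) - x k = α k • ((α k)⁻¹ • (x (k + 1) - x k)) := by
          rw [smul_smul, mul_inv_cancel₀ ha.ne', one_smul]
      _ = α k • (v (k + 1) - x (k + 1)) := by rw [h]
  have hdual' : lam (k + 1) - lam k = (α k / θ k) • (A (v (k + 1)) - b) := by
    have hco : (α k / θ k) * (θ k / α k) = 1 := by field_simp
    calc lam (k + 1) - lam k
        = (α k / θ k) • ((θ k / α k) • (lam (k + 1) - lam k)) := by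
          rw [smul_smul, hco, one_smul]
      _ = (α k / θ k) • (A (v (k + 1)) - b) := by rw [hdual k]
  have hlh : lamhat k = lam (k + 1) - (α k / θ k) • (A (v (k + 1) - v k)) := by
    have h2 : lam (k + 1) = lam k + (α k / θ k) • (A (v (k + 1)) - b) := by
      rw [← hdual']; abel
    rw [hlamhat k, h2, map_sub]
    module
  have hAu : A (v (k + 1)) - A xs = A (v (k + 1)) - b := by rw [hKKT1]
  -- scalar facts
  have hnn : 0 ≤ μβ / 2 * ‖α k • (x (k + 1) - v (k + 1))‖ ^ 2 :=
    mul_nonneg (by linarith) (sq_nonneg _)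
  have P1 : fβ (x (k + 1)) + α k * ⟪ξ, x (k + 1) - v (k + 1)⟫ ≤ fβ (x k) := by
    have h := hSξ (x k) (hXmem k)
    have h2 : x k - x (k + 1) = α k • (x (k + 1) - v (k + 1)) := by
      rw [← neg_sub (x (k + 1)) (x k), hprim', ← smul_neg, neg_sub]
    rw [h2, real_inner_smul_right] at h
    linarith
  have P2 : fβ (x (k + 1)) - ⟪ξ, x (k + 1) - xs⟫ + μβ / 2 * ‖x (k + 1) - xs‖ ^ 2 ≤ fβ xs := by
    have h := hSξ xs hxs
    have h2 : ⟪ξ, xs - x (k + 1)⟫ = -⟪ξ, x (k + 1) - xs⟫ := by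
      rw [← inner_neg_right]; congr 1; abel
    have h3 : ‖xs - x (k + 1)‖ = ‖x (k + 1) - xs‖ := norm_sub_rev _ _
    rw [h2, h3] at h
    linarith
  have hAv : A (x (k + 1)) - A (x k) = α k • (A (v (k + 1)) - A (x (k + 1))) := by
    rw [← map_sub, hprim', map_smul, map_sub]
  have P3 : (1 + α k) * ⟪ls, A (x (k + 1)) - b⟫
      = ⟪ls, A (x k) - b⟫ + α k * ⟪ls, A (v (k + 1)) - b⟫ := by
    have h := congrArg (fun z => ⟪ls, z⟫) hAv
    simp only [real_inner_smul_right] at h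
    have e1 : ⟪ls, A (x (k + 1)) - A (x k)⟫
        = ⟪ls, A (x (k + 1)) - b⟫ - ⟪ls, A (x k) - b⟫ := by
      rw [← inner_sub_right]; congr 1; abel
    have e2 : ⟪ls, A (v (k + 1)) - A (x (k + 1))⟫
        = ⟪ls, A (v (k + 1)) - b⟫ - ⟪ls, A (x (k + 1)) - b⟫ := by
      rw [← inner_sub_right]; congr 1; abel
    rw [e1, e2] at h
    linarith
  have P4 : θ k / 2 * ‖lam (k + 1) - ls‖ ^ 2 - θ k / 2 * ‖lam k - ls‖ ^ 2
      = α k * ⟪A (v (k + 1)) - b, lam (k + 1) - ls⟫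
        - α k ^ 2 / θ k * (‖A (v (k + 1)) - b‖ ^ 2 / 2) := by
    have h1 : lam (k + 1) - ls = (lam k - ls) + (α k / θ k) • (A (v (k + 1)) - b) := by
      rw [← hdual']; abel
    have h2 : ‖lam (k + 1) - ls‖ ^ 2 = ‖lam k - ls‖ ^ 2
        + 2 * (α k / θ k * ⟪lam k - ls, A (v (k + 1)) - b⟫)
        + (α k / θ k * ‖A (v (k + 1)) - b‖) ^ 2 := by
      rw [h1, norm_add_sq_real, real_inner_smul_right, norm_smul, Real.norm_eq_abs,
        abs_of_pos (div_pos ha ht)]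
    have h3 : ⟪A (v (k + 1)) - b, lam (k + 1) - ls⟫
        = ⟪lam k - ls, A (v (k + 1)) - b⟫ + α k / θ k * ‖A (v (k + 1)) - b‖ ^ 2 := by
      rw [real_inner_comm, h1, inner_add_left, real_inner_smul_left,
        real_inner_self_eq_norm_sq]
    rw [h2, h3]
    field_simp
    ring
  have P5 : γ k * ⟪v (k + 1) - v k, v (k + 1) - xs⟫
      = α k * μβ * ⟪x (k + 1) - v (k + 1), v (k + 1) - xs⟫
        - α k * ⟪ξ, v (k + 1) - xs⟫ - α k * ⟪lamhat k, A (v (k + 1)) - b⟫ := by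
    have hgg : α k * (γ k / α k) = γ k := by field_simp
    have hV' : γ k • (v (k + 1) - v k)
        = (α k * μβ) • (x (k + 1) - v (k + 1))
          - α k • (ξ + (ContinuousLinearMap.adjoint A) (lamhat k)) := by
      calc γ k • (v (k + 1) - v k)
          = (α k * (γ k / α k)) • (v (k + 1) - v k) := by rw [hgg]
        _ = α k • ((γ k / α k) • (v (k + 1) - v k)) := by rw [smul_smul]
        _ = α k • (μβ • (x (k + 1) - v (k + 1))
              - (ξ + (ContinuousLinearMap.adjoint A) (lamhat k))) := by rw [hV]
        _ = _ := by rw [smul_sub, smul_smul]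
    have h := congrArg (fun z => ⟪z, v (k + 1) - xs⟫) hV'
    simp only [real_inner_smul_left, inner_sub_left, inner_add_left] at h
    rw [ContinuousLinearMap.adjoint_inner_left, map_sub, hAu] at h
    have B1 : γ k * ⟪v (k + 1) - v k, v (k + 1) - xs⟫
        = γ k * (⟪v (k + 1), v (k + 1) - xs⟫ - ⟪v k, v (k + 1) - xs⟫) := by rw [inner_sub_left]
    have B2 : α k * μβ * ⟪x (k + 1) - v (k + 1), v (k + 1) - xs⟫
        = α k * μβ * (⟪x (k + 1), v (k + 1) - xs⟫ - ⟪v (k + 1), v (k + 1) - xs⟫) := by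
      rw [inner_sub_left]
    linarith [h, B1, B2]
  have P6 : γ k / 2 * ‖v (k + 1) - xs‖ ^ 2 - γ k / 2 * ‖v k - xs‖ ^ 2
      = γ k * ⟪v (k + 1) - v k, v (k + 1) - xs⟫ - γ k / 2 * ‖v (k + 1) - v k‖ ^ 2 := by
    have h1 : v k - xs = (v (k + 1) - xs) - (v (k + 1) - v k) := by abel
    rw [h1, norm_sub_sq_real (v (k + 1) - xs) (v (k + 1) - v k),
      real_inner_comm (v (k + 1) - xs) (v (k + 1) - v k)]
    ring
  have P7' : α k * ⟪lamhat k, A (v (k + 1)) - b⟫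
      = α k * ⟪lam (k + 1), A (v (k + 1)) - b⟫
        - α k ^ 2 / θ k * ⟪A (v (k + 1) - v k), A (v (k + 1)) - b⟫ := by
    rw [hlh, inner_sub_left, real_inner_smul_left]
    field_simp
  have P8' : α k * ⟪ξ, x (k + 1) - xs⟫
      = α k * (⟪ξ, x (k + 1) - v (k + 1)⟫ + ⟪ξ, v (k + 1) - xs⟫) := by
    rw [← inner_add_right]
    congr 2
    abel
  have P9' : α k * μβ / 2 * ‖x (k + 1) - xs‖ ^ 2
      = α k * μβ / 2 * (‖x (k + 1) - v (k + 1)‖ ^ 2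
        + 2 * ⟪x (k + 1) - v (k + 1), v (k + 1) - xs⟫ + ‖v (k + 1) - xs‖ ^ 2) := by
    have h : x (k + 1) - xs = (x (k + 1) - v (k + 1)) + (v (k + 1) - xs) := by abel
    rw [h, norm_add_sq_real]
  have P10 : ⟪A (v (k + 1) - v k), A (v (k + 1)) - b⟫
      ≤ ‖A (v (k + 1)) - b‖ ^ 2 / 2 + ‖A‖ ^ 2 / 2 * ‖v (k + 1) - v k‖ ^ 2 := by
    have h1 := real_inner_le_norm (A (v (k + 1) - v k)) (A (v (k + 1)) - b)
    have h2 : ‖A (v (k + 1) - v k)‖ ≤ ‖A‖ * ‖v (k + 1) - v k‖ := A.le_opNorm _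
    nlinarith [mul_le_mul_of_nonneg_right h2 (norm_nonneg (A (v (k + 1)) - b)),
      sq_nonneg (‖A‖ * ‖v (k + 1) - v k‖ - ‖A (v (k + 1)) - b‖)]
  have P10' := mul_le_mul_of_nonneg_left P10 (by positivity : (0:ℝ) ≤ α k ^ 2 / θ k)
  have hc2 : α k ^ 2 / θ k * (‖A‖ ^ 2 / 2 * ‖v (k + 1) - v k‖ ^ 2)
      = γ k / 2 * ‖v (k + 1) - v k‖ ^ 2 := by
    have hc : α k ^ 2 / θ k * ‖A‖ ^ 2 = γ k := by
      field_simp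
      linarith [hstep k]
    rw [← hc]
    ring
  have hθ1 : (1 + α k) * (θ (k + 1) / 2 * ‖lam (k + 1) - ls‖ ^ 2)
      = θ k / 2 * ‖lam (k + 1) - ls‖ ^ 2 := by
    rw [hθ k]
    field_simp
  have hγ1 : (1 + α k) * (γ (k + 1) / 2 * ‖v (k + 1) - xs‖ ^ 2)
      = (γ k + μβ * α k) / 2 * ‖v (k + 1) - xs‖ ^ 2 := by
    rw [hγ k]
    field_simp
  have hdd : 0 ≤ α k * μβ * ‖x (k + 1) - v (k + 1)‖ ^ 2 :=
    mul_nonneg (mul_nonneg ha.le hμβ0) (sq_nonneg _)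
  have P2' := mul_le_mul_of_nonneg_left P2 ha.le
  have PB : α k * ⟪A (v (k + 1)) - b, lam (k + 1) - ls⟫
      = α k * (⟪lam (k + 1), A (v (k + 1)) - b⟫ - ⟪ls, A (v (k + 1)) - b⟫) := by
    rw [inner_sub_right, real_inner_comm (A (v (k + 1)) - b) (lam (k + 1)),
      real_inner_comm (A (v (k + 1)) - b) ls]
  have hAxs : A xs - b = 0 := by rw [hKKT1, sub_self]
  simp only [hEf, hLβ, hAxs, inner_zero_right, add_zero]
  linarith [P1, P2', P3, P4, P5, P6, P7', P8', P9', P10', hc2, hθ1, hγ1, hdd, PB]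
end

section
/- Let μ_β ≥ 0, ‖A‖ > 0, θ₀ = 1, γ₀ > 0, and let the sequences satisfy θ_{k+1} = θ_k/(1+α_k), γ_{k+1} = (γ_k + μ_β α_k)/(1+α_k), with α_k = √(θ_k γ_k)/‖A‖. Set γ_min = min{μ_β, γ₀}, γ_max = max{μ_β, γ₀}, and Q = 3‖A‖ + √γ_max. Then for all k ∈ ℕ, θ_k ≤ min{ Q/(√γ₀ · k + Q), Q²/(√γ_min · k + Q)² }. -/
set_option maxHeartbeats 1000000

/-- Decay estimate (4.5) of Theorem 4.1: for the parameter sequences of the semi-implicit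
scheme with `α_k = √(θ_k γ_k)/‖A‖`, one has
`θ_k ≤ min{Q/(√γ₀ k + Q), Q²/(√γ_min k + Q)²}` with `Q = 3‖A‖ + √γ_max`. -/
theorem semi_implicit_theta_decay
    (normA μβ γmin γmax Q : ℝ) (θ γ α : ℕ → ℝ)
    (hnormA : 0 < normA) (hμβ : 0 ≤ μβ)
    (hθ0 : θ 0 = 1) (hγ0 : 0 < γ 0)
    (hγmin : γmin = min μβ (γ 0)) (hγmax : γmax = max μβ (γ 0))
    (hQ : Q = 3 * normA + Real.sqrt γmax)
    (hα : ∀ k, α k = Real.sqrt (θ k * γ k) / normA)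
    (hθ : ∀ k, θ (k + 1) = θ k / (1 + α k))
    (hγ : ∀ k, γ (k + 1) = (γ k + μβ * α k) / (1 + α k)) :
    ∀ k : ℕ, θ k ≤ min (Q / (Real.sqrt (γ 0) * k + Q))
      (Q ^ 2 / (Real.sqrt γmin * k + Q) ^ 2) := by
  have hγmin0 : 0 ≤ γmin := by rw [hγmin]; exact le_min hμβ hγ0.le
  have hγminμ : γmin ≤ μβ := by rw [hγmin]; exact min_le_left _ _
  have hμγmax : μβ ≤ γmax := by rw [hγmax]; exact le_max_left _ _
  have hγ0max : γ 0 ≤ γmax := by rw [hγmax]; exact le_max_right _ _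
  have hγmax0 : 0 ≤ γmax := hγ0.le.trans hγ0max
  have hsqmax0 : 0 ≤ Real.sqrt γmax := Real.sqrt_nonneg _
  have hQpos : 0 < Q := by rw [hQ]; positivity
  have hAQ : normA ≤ Q := by rw [hQ]; nlinarith
  have main : ∀ k, 0 < θ k ∧ θ k ≤ 1 ∧ γmin ≤ γ k ∧ γ k ≤ γmax ∧ γ 0 * θ k ≤ γ k ∧
      θ k * (Real.sqrt (γ 0) * k + Q) ≤ Q ∧
      Real.sqrt (θ k) * (Real.sqrt γmin * k + Q) ≤ Q := by
    intro k
    induction k with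
    | zero =>
      refine ⟨by rw [hθ0]; norm_num, by rw [hθ0], by rw [hγmin]; exact min_le_right _ _,
        hγ0max, by rw [hθ0]; norm_num, by rw [hθ0]; norm_num, ?_⟩
      rw [hθ0]; simp
    | succ k ih =>
      obtain ⟨h1, h2, h3, h4, h5, h6, h7⟩ := ih
      set a := α k with ha'
      have hθγ0 : 0 ≤ θ k * γ k := mul_nonneg h1.le (hγmin0.trans h3)
      have ha0 : 0 ≤ a := by rw [ha', hα]; positivity
      have hs1 : (1:ℝ) ≤ 1 + a := by linarith
      have hspos : (0:ℝ) < 1 + a := by linarith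
      -- a * normA = sqrt (θ k * γ k)
      have haA : a * normA = Real.sqrt (θ k * γ k) := by
        rw [ha', hα]; field_simp
      -- upper bound on a
      have haub : a * normA ≤ Real.sqrt γmax := by
        rw [haA]
        apply Real.sqrt_le_sqrt
        nlinarith [hγmin0.trans h3, mul_le_mul h2 h4 (hγmin0.trans h3) (by norm_num : (0:ℝ) ≤ 1)]
      -- θ(k+1)
      have hθ1 : θ (k+1) = θ k / (1 + a) := by rw [hθ]
      have hγ1 : γ (k+1) = (γ k + μβ * a) / (1 + a) := by rw [hγ]
      have p1 : 0 < θ (k+1) := by rw [hθ1]; positivity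
      have p2 : θ (k+1) ≤ 1 := by
        rw [hθ1, div_le_one hspos]; linarith
      have p3 : γmin ≤ γ (k+1) := by
        rw [hγ1, le_div_iff₀ hspos]; nlinarith
      have p4 : γ (k+1) ≤ γmax := by
        rw [hγ1, div_le_iff₀ hspos]; nlinarith
      have p5 : γ 0 * θ (k+1) ≤ γ (k+1) := by
        rw [hθ1, hγ1, ← mul_div_assoc, div_le_div_iff₀ hspos hspos]
        nlinarith [mul_le_mul_of_nonneg_right h5 hspos.le,
          mul_nonneg (mul_nonneg hμβ ha0) hspos.le]
      -- key inequality for bound 1: θ k * sqrt (γ 0) ≤ Q * a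
      have key1 : θ k * Real.sqrt (γ 0) ≤ Q * a := by
        have h11 : θ k * Real.sqrt (γ 0) = Real.sqrt (θ k ^ 2 * γ 0) := by
          rw [Real.sqrt_mul (by positivity), Real.sqrt_sq h1.le]
        have h12 : Real.sqrt (θ k ^ 2 * γ 0) ≤ Real.sqrt (θ k * γ k) := by
          apply Real.sqrt_le_sqrt
          nlinarith [mul_le_mul_of_nonneg_left h5 h1.le]
        calc θ k * Real.sqrt (γ 0) = Real.sqrt (θ k ^ 2 * γ 0) := h11
          _ ≤ Real.sqrt (θ k * γ k) := h12
          _ = a * normA := haA.symm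
          _ ≤ a * Q := mul_le_mul_of_nonneg_left hAQ ha0
          _ = Q * a := mul_comm _ _
      have p6 : θ (k+1) * (Real.sqrt (γ 0) * (k+1 : ℕ) + Q) ≤ Q := by
        rw [hθ1, div_mul_eq_mul_div, div_le_iff₀ hspos]
        push_cast
        have e1 : θ k * (Real.sqrt (γ 0) * ((k : ℝ) + 1) + Q) =
            θ k * (Real.sqrt (γ 0) * k + Q) + θ k * Real.sqrt (γ 0) := by ring
        have e2 : Q * (1 + a) = Q + Q * a := by ring
        rw [e1, e2]
        exact add_le_add h6 key1
      -- bound 2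
      have hss : Real.sqrt (1 + a) * Real.sqrt (1 + a) = 1 + a :=
        Real.mul_self_sqrt hspos.le
      have hs0 : 0 ≤ Real.sqrt (1 + a) := Real.sqrt_nonneg _
      have hsle : Real.sqrt (1 + a) ≤ 1 + a := by
        nlinarith [Real.sqrt_le_sqrt hs1, Real.sqrt_one]
      have hA2 : normA * (Real.sqrt (1 + a) + 1) ≤ Q := by
        rw [hQ]
        nlinarith [mul_le_mul_of_nonneg_left hsle hnormA.le, haub]
      -- Q * (sqrt(1+a) - 1) ≥ a * normA
      have key2 : a * normA ≤ Q * (Real.sqrt (1 + a) - 1) := by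
        have hmul : Q * (Real.sqrt (1 + a) - 1) * (Real.sqrt (1 + a) + 1) = Q * a := by
          linear_combination Q * hss
        have hpos2 : 0 < Real.sqrt (1 + a) + 1 := by linarith
        rw [← mul_le_mul_iff_of_pos_right hpos2, hmul]
        calc a * normA * (Real.sqrt (1 + a) + 1)
            = a * (normA * (Real.sqrt (1 + a) + 1)) := by ring
          _ ≤ a * Q := mul_le_mul_of_nonneg_left hA2 ha0
          _ = Q * a := mul_comm _ _
      have key2' : Real.sqrt (θ k) * Real.sqrt γmin ≤ Q * (Real.sqrt (1 + a) - 1) := by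
        have e1 : Real.sqrt (θ k) * Real.sqrt γmin = Real.sqrt (θ k * γmin) :=
          (Real.sqrt_mul h1.le _).symm
        have e2 : Real.sqrt (θ k * γmin) ≤ Real.sqrt (θ k * γ k) := by
          apply Real.sqrt_le_sqrt; nlinarith
        calc Real.sqrt (θ k) * Real.sqrt γmin ≤ Real.sqrt (θ k * γ k) := by
              rw [e1]; exact e2
          _ = a * normA := haA.symm
          _ ≤ _ := key2
      have p7 : Real.sqrt (θ (k+1)) * (Real.sqrt γmin * (k+1 : ℕ) + Q) ≤ Q := by
        have hsq : Real.sqrt (θ (k+1)) = Real.sqrt (θ k) / Real.sqrt (1 + a) := by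
          rw [hθ1, Real.sqrt_div h1.le]
        have hsq0 : 0 < Real.sqrt (1 + a) := by
          apply Real.sqrt_pos.mpr hspos
        rw [hsq, div_mul_eq_mul_div, div_le_iff₀ hsq0]
        push_cast
        have expand : Real.sqrt (θ k) * (Real.sqrt γmin * ((k:ℝ)+1) + Q) =
            Real.sqrt (θ k) * (Real.sqrt γmin * k + Q) + Real.sqrt (θ k) * Real.sqrt γmin := by
          ring
        rw [expand]
        have hQs : Q * Real.sqrt (1 + a) = Q + Q * (Real.sqrt (1 + a) - 1) := by ring
        rw [hQs]
        exact add_le_add h7 key2'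
      exact ⟨p1, p2, p3, p4, p5, p6, p7⟩
  intro k
  obtain ⟨h1, h2, h3, h4, h5, h6, h7⟩ := main k
  have hd1 : 0 < Real.sqrt (γ 0) * k + Q := by positivity
  have hd2 : 0 < Real.sqrt γmin * k + Q := by positivity
  refine le_min ?_ ?_
  · rw [le_div_iff₀ hd1]; exact h6
  · rw [le_div_iff₀ (by positivity)]
    have hsq : Real.sqrt (θ k) * Real.sqrt (θ k) = θ k := Real.mul_self_sqrt h1.le
    have h8 := mul_le_mul h7 h7 (mul_nonneg (Real.sqrt_nonneg (θ k)) hd2.le) hQpos.le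
    have e : θ k * (Real.sqrt γmin * k + Q) ^ 2 =
        (Real.sqrt (θ k) * (Real.sqrt γmin * k + Q)) *
          (Real.sqrt (θ k) * (Real.sqrt γmin * k + Q)) := by
      linear_combination (-(Real.sqrt γmin * (k : ℝ) + Q) ^ 2) * hsq
    rw [e, pow_two]
    exact h8
end
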